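/- Let S = {(v,w) ∈ ℕ² : v + w ≤ 3} index the degree-3 total order basis on the reference quadrilateral. Let M be the diagonal real S×S matrix with M_{(v,w),(v,w)} = 4/((2v+1)(2w+1)). For real parameters q0, q1, q2, let Q be the symmetric S×S matrix whose only nonzero entries (listing one entry of each symmetric pair) are Q_{(0,3),(0,3)} = Q_{(3,0),(3,0)} = q0, Q_{(1,2),(1,2)} = Q_{(2,1),(2,1)} = q1, Q_{(0,3),(2,1)} = q2, and Q_{(1,2),(3,0)} = q2. Then M + Q is positive definite if and only if q0 > −4/7, q1 > −4/15, and 28·q0 + 105·q0·q1 + 60·q1 − 105·q2² + 16 > 0. -/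

import Mathlib

open scoped Matrix

/-- The index set of the degree-3 total order basis: modes `(v,w)` with `v + w ≤ 3`. -/
def TO3 : Type := {p : Fin 4 × Fin 4 // (p.1 : ℕ) + (p.2 : ℕ) ≤ 3}

instance : Fintype TO3 := Subtype.fintype _
instance : DecidableEq TO3 := Subtype.instDecidableEq

/-- Modal mass matrix of the degree-3 total order Legendre basis:
`M_{(v,w),(v,w)} = 4/((2v+1)(2w+1))`. -/
noncomputable def massTO3 : Matrix TO3 TO3 ℝ :=
  Matrix.diagonal fun p =>
    (4 : ℝ) / (((2 * (p.val.1 : ℕ) + 1) * (2 * (p.val.2 : ℕ) + 1) : ℕ) : ℝ)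

/-- The symmetric filter matrix `Q(q0, q1, q2)` for the degree-3 total order basis. -/
def filterTO3 (q0 q1 q2 : ℝ) : Matrix TO3 TO3 ℝ :=
  fun i j =>
    if (i.val = (0, 3) ∧ j.val = (0, 3)) ∨ (i.val = (3, 0) ∧ j.val = (3, 0)) then q0
    else if (i.val = (1, 2) ∧ j.val = (1, 2)) ∨ (i.val = (2, 1) ∧ j.val = (2, 1)) then q1
    else if (i.val = (0, 3) ∧ j.val = (2, 1)) ∨ (i.val = (2, 1) ∧ j.val = (0, 3)) ∨
            (i.val = (1, 2) ∧ j.val = (3, 0)) ∨ (i.val = (3, 0) ∧ j.val = (1, 2)) then q2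
    else 0

def m00 : TO3 := ⟨(0,0), by decide⟩
def m01 : TO3 := ⟨(0,1), by decide⟩
def m02 : TO3 := ⟨(0,2), by decide⟩
def m03 : TO3 := ⟨(0,3), by decide⟩
def m10 : TO3 := ⟨(1,0), by decide⟩
def m11 : TO3 := ⟨(1,1), by decide⟩
def m12 : TO3 := ⟨(1,2), by decide⟩
def m20 : TO3 := ⟨(2,0), by decide⟩
def m21 : TO3 := ⟨(2,1), by decide⟩
def m30 : TO3 := ⟨(3,0), by decide⟩

def eTO3 : Fin 10 ≃ TO3 where
  toFun := ![m00,m01,m02,m03,m10,m11,m12,m20,m21,m30]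
  invFun := fun p =>
    if p = m00 then 0 else if p = m01 then 1 else if p = m02 then 2 else
    if p = m03 then 3 else if p = m10 then 4 else if p = m11 then 5 else
    if p = m12 then 6 else if p = m20 then 7 else if p = m21 then 8 else 9
  left_inv := by decide
  right_inv := by decide

lemma sum_TO3 (f : TO3 → ℝ) : ∑ p, f p =
    f m00 + f m01 + f m02 + f m03 + f m10 + f m11 + f m12 + f m20 + f m21 + f m30 := by
  rw [← Equiv.sum_comp eTO3]
  simp [eTO3, Fin.sum_univ_succ]
  ring

set_option maxHeartbeats 2000000 in
lemma quadTO3 (q0 q1 q2 : ℝ) (x : TO3 → ℝ) :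
    x ⬝ᵥ (massTO3 + filterTO3 q0 q1 q2).mulVec x =
      4 * x m00 ^ 2 + (4/3) * x m01 ^ 2 + (4/5) * x m02 ^ 2 + (4/3) * x m10 ^ 2
      + (4/9) * x m11 ^ 2 + (4/5) * x m20 ^ 2
      + ((4/7 + q0) * x m03 ^ 2 + 2 * q2 * x m03 * x m21 + (4/15 + q1) * x m21 ^ 2)
      + ((4/7 + q0) * x m30 ^ 2 + 2 * q2 * x m30 * x m12 + (4/15 + q1) * x m12 ^ 2) := by
  simp only [dotProduct, Matrix.mulVec, Matrix.add_apply, sum_TO3]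
  simp only [massTO3, Matrix.diagonal_apply]
  simp (config := { decide := true }) only [massTO3, filterTO3, Matrix.add_apply,
    Matrix.diagonal_apply, m00, m01, m02, m03, m10, m11, m12, m20, m21, m30,
    if_true, if_false]
  push_cast
  norm_num [show ((3 : Fin 4) : ℕ) = 3 from rfl]
  ring

lemma hermTO3 (q0 q1 q2 : ℝ) : (massTO3 + filterTO3 q0 q1 q2).IsHermitian := by
  apply Matrix.IsHermitian.add
  · ext i j
    simp only [Matrix.conjTranspose_apply, massTO3, Matrix.diagonal_apply, star_trivial]
    split_ifs with h1 h2 h2 <;>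
      first | rfl | (subst h1; rfl) | (exact absurd h1.symm h2) | (exact absurd h2.symm h1)
  · show (filterTO3 q0 q1 q2)ᴴ = _
    have h1 : ∀ i j : TO3,
        ((j.val = (0, 3) ∧ i.val = (0, 3)) ∨ (j.val = (3, 0) ∧ i.val = (3, 0))) ↔
        ((i.val = (0, 3) ∧ j.val = (0, 3)) ∨ (i.val = (3, 0) ∧ j.val = (3, 0))) := by decide
    have h2 : ∀ i j : TO3,
        ((j.val = (1, 2) ∧ i.val = (1, 2)) ∨ (j.val = (2, 1) ∧ i.val = (2, 1))) ↔
        ((i.val = (1, 2) ∧ j.val = (1, 2)) ∨ (i.val = (2, 1) ∧ j.val = (2, 1))) := by decide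
    have h3 : ∀ i j : TO3,
        ((j.val = (0, 3) ∧ i.val = (2, 1)) ∨ (j.val = (2, 1) ∧ i.val = (0, 3)) ∨
         (j.val = (1, 2) ∧ i.val = (3, 0)) ∨ (j.val = (3, 0) ∧ i.val = (1, 2))) ↔
        ((i.val = (0, 3) ∧ j.val = (2, 1)) ∨ (i.val = (2, 1) ∧ j.val = (0, 3)) ∨
         (i.val = (1, 2) ∧ j.val = (3, 0)) ∨ (i.val = (3, 0) ∧ j.val = (1, 2))) := by decide
    ext i j
    simp only [Matrix.conjTranspose_apply, filterTO3, star_trivial, h1 i j, h2 i j, h3 i j]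

lemma blk_nonneg {a b c : ℝ} (ha : 0 < a) (hd : c ^ 2 < a * b) (u v : ℝ) :
    0 ≤ a * u ^ 2 + 2 * c * u * v + b * v ^ 2 := by
  nlinarith [sq_nonneg (a * u + c * v), sq_nonneg v, sq_nonneg u]

lemma blk_pos {a b c : ℝ} (ha : 0 < a) (hd : c ^ 2 < a * b) {u v : ℝ}
    (h : u ≠ 0 ∨ v ≠ 0) : 0 < a * u ^ 2 + 2 * c * u * v + b * v ^ 2 := by
  have hb : 0 < b := by nlinarith [sq_nonneg c]
  rcases h with h | h
  · have hu : 0 < u ^ 2 := by positivity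
    nlinarith [sq_nonneg (b * v + c * u), mul_pos (sub_pos.2 hd) hu]
  · have hv : 0 < v ^ 2 := by positivity
    nlinarith [sq_nonneg (a * u + c * v), mul_pos (sub_pos.2 hd) hv]

lemma TO3_eq_zero {x : TO3 → ℝ} (e00 : x m00 = 0) (e01 : x m01 = 0) (e02 : x m02 = 0)
    (e03 : x m03 = 0) (e10 : x m10 = 0) (e11 : x m11 = 0) (e12 : x m12 = 0)
    (e20 : x m20 = 0) (e21 : x m21 = 0) (e30 : x m30 = 0) : x = 0 := by
  funext p
  obtain ⟨⟨v, w⟩, hvw⟩ := p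
  fin_cases v <;> fin_cases w <;>
    first | exact absurd hvw (by decide) | assumption

set_option maxHeartbeats 1000000 in
/-- For the degree-3 total order basis, `M + Q` is positive definite iff
`q0 > -4/7`, `q1 > -4/15`, and `28 q0 + 105 q0 q1 + 60 q1 - 105 q2² + 16 > 0`. -/
theorem stmt_3 (q0 q1 q2 : ℝ) :
    (massTO3 + filterTO3 q0 q1 q2).PosDef ↔
      q0 > -4 / 7 ∧ q1 > -4 / 15 ∧
      28 * q0 + 105 * q0 * q1 + 60 * q1 - 105 * q2 ^ 2 + 16 > 0 := by
  constructor
  · intro h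
    have key : ∀ x : TO3 → ℝ, x ≠ 0 →
        0 < x ⬝ᵥ (massTO3 + filterTO3 q0 q1 q2).mulVec x := by
      intro x hx
      have := h.dotProduct_mulVec_pos hx
      rwa [show star x = x from funext fun p => star_trivial _] at this
    have h03 : 0 < 4/7 + q0 := by
      have := key (fun p => if p = m03 then 1 else 0)
        (by intro hc; simpa using congrFun hc m03)
      rw [quadTO3] at this
      simp (config := { decide := true }) only [if_true, if_false] at this
      norm_num at this
      linarith
    have h21 : 0 < 4/15 + q1 := by
      have := key (fun p => if p = m21 then 1 else 0)
        (by intro hc; simpa using congrFun hc m21)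
      rw [quadTO3] at this
      simp (config := { decide := true }) only [if_true, if_false] at this
      norm_num at this
      linarith
    have hdet : 0 < (4/7 + q0) * (4/15 + q1) - q2 ^ 2 := by
      have := key (fun p => if p = m03 then 4/15 + q1 else if p = m21 then -q2 else 0)
        (by
          intro hc
          have := congrFun hc m03
          simp at this
          linarith)
      rw [quadTO3] at this
      simp (config := { decide := true }) only [if_true, if_false] at this
      norm_num at this
      nlinarith [this, h21]
    refine ⟨by linarith, by linarith, by nlinarith [hdet]⟩
  · rintro ⟨h0, h1, h2⟩
    have ha : 0 < 4/7 + q0 := by linarith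
    have hb : 0 < 4/15 + q1 := by linarith
    have hd : q2 ^ 2 < (4/7 + q0) * (4/15 + q1) := by nlinarith
    refine Matrix.PosDef.of_dotProduct_mulVec_pos (hermTO3 q0 q1 q2) ?_
    intro x hx
    rw [show star x = x from funext fun p => star_trivial _, quadTO3]
    have n00 : 0 ≤ 4 * x m00 ^ 2 := by positivity
    have n01 : 0 ≤ (4/3) * x m01 ^ 2 := by positivity
    have n02 : 0 ≤ (4/5) * x m02 ^ 2 := by positivity
    have n10 : 0 ≤ (4/3) * x m10 ^ 2 := by positivity
    have n11 : 0 ≤ (4/9) * x m11 ^ 2 := by positivity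
    have n20 : 0 ≤ (4/5) * x m20 ^ 2 := by positivity
    have nB1 : 0 ≤ (4/7 + q0) * x m03 ^ 2 + 2 * q2 * x m03 * x m21 + (4/15 + q1) * x m21 ^ 2 :=
      blk_nonneg ha hd _ _
    have nB2 : 0 ≤ (4/7 + q0) * x m30 ^ 2 + 2 * q2 * x m30 * x m12 + (4/15 + q1) * x m12 ^ 2 :=
      blk_nonneg ha hd _ _
    have h10 : x m00 ≠ 0 ∨ x m01 ≠ 0 ∨ x m02 ≠ 0 ∨ x m03 ≠ 0 ∨ x m10 ≠ 0 ∨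
        x m11 ≠ 0 ∨ x m12 ≠ 0 ∨ x m20 ≠ 0 ∨ x m21 ≠ 0 ∨ x m30 ≠ 0 := by
      by_contra hcon
      push_neg at hcon
      obtain ⟨e00, e01, e02, e03, e10, e11, e12, e20, e21, e30⟩ := hcon
      exact hx (TO3_eq_zero e00 e01 e02 e03 e10 e11 e12 e20 e21 e30)
    rcases h10 with h | h | h | h | h | h | h | h | h | h
    · have : 0 < 4 * x m00 ^ 2 := by positivity
      linarith
    · have : 0 < (4/3) * x m01 ^ 2 := by positivity
      linarith
    · have : 0 < (4/5) * x m02 ^ 2 := by positivity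
      linarith
    · have := blk_pos ha hd (u := x m03) (v := x m21) (Or.inl h)
      linarith
    · have : 0 < (4/3) * x m10 ^ 2 := by positivity
      linarith
    · have : 0 < (4/9) * x m11 ^ 2 := by positivity
      linarith
    · have := blk_pos ha hd (u := x m30) (v := x m12) (Or.inr h)
      linarith
    · have : 0 < (4/5) * x m20 ^ 2 := by positivity
      linarith
    · have := blk_pos ha hd (u := x m03) (v := x m21) (Or.inr h)
      linarith
    · have := blk_pos ha hd (u := x m30) (v := x m12) (Or.inl h)
      linarith
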